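/- arXiv:0806.0168 — 3 statements merged into one kernel-verified Lean document; each statement's English description precedes it below -/
import Mathlib

section
/- For u ∈ ℂ, u ≠ 0, and D ∈ {1, −1}, define 4×4 complex matrices A = [[1, −(D⁻²+D⁻¹+1), (D⁻²+D⁻¹+1)u, −u], [0, −1, (D⁻¹+1)u, −u], [0, 0, u, −u], [0, 0, 0, −u]] and B = [[−u, 0, 0, 0], [−u, u, 0, 0], [−D, D+1, −1, 0], [−D³, D³+D²+D, −D²−D−1, 1]], and define p₁(u,t) = u²t⁴ + (u+u²+u³)t³ + (1+2u+2u²+2u³+u⁴)t² + (u+u²+u³)t + u². Then A and B are invertible, and the characteristic polynomial of A·B⁻¹ in the variable t equals p₁(u,t)/u² if D = −1, and equals p₁(−u,t)/u² if D = 1. -/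
set_option maxHeartbeats 1000000

/-- The `A` matrix of the 4-dimensional Tuba–Wenzl representation, normalized with
eigenvalues `{±u, ±1}`. -/
noncomputable def twA (u D : ℂ) : Matrix (Fin 4) (Fin 4) ℂ :=
  !![1, -(D⁻¹ ^ 2 + D⁻¹ + 1), (D⁻¹ ^ 2 + D⁻¹ + 1) * u, -u;
     0, -1, (D⁻¹ + 1) * u, -u;
     0, 0, u, -u;
     0, 0, 0, -u]

/-- The `B` matrix of the 4-dimensional Tuba–Wenzl representation. -/
def twB (u D : ℂ) : Matrix (Fin 4) (Fin 4) ℂ :=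
  !![-u, 0, 0, 0;
     -u, u, 0, 0;
     -D, D + 1, -1, 0;
     -D ^ 3, D ^ 3 + D ^ 2 + D, -D ^ 2 - D - 1, 1]

/-- The subgroup of `GL(4, ℂ)` generated by the (invertible) matrices `A` and `B`. -/
def matGenGroup (A B : Matrix (Fin 4) (Fin 4) ℂ) :
    Subgroup (Matrix (Fin 4) (Fin 4) ℂ)ˣ :=
  Subgroup.closure {g : (Matrix (Fin 4) (Fin 4) ℂ)ˣ |
    (g : Matrix (Fin 4) (Fin 4) ℂ) = A ∨ (g : Matrix (Fin 4) (Fin 4) ℂ) = B}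

/-- The polynomial `p₁(u, t)` from Rowell–Tuba. -/
def p₁ (u t : ℂ) : ℂ :=
  u ^ 2 * t ^ 4 + (u + u ^ 2 + u ^ 3) * t ^ 3 +
    (1 + 2 * u + 2 * u ^ 2 + 2 * u ^ 3 + u ^ 4) * t ^ 2 + (u + u ^ 2 + u ^ 3) * t + u ^ 2

lemma eval_charpoly' (M : Matrix (Fin 4) (Fin 4) ℂ) (t : ℂ) :
    Polynomial.eval t M.charpoly = (t • (1 : Matrix (Fin 4) (Fin 4) ℂ) - M).det := by
  rw [Matrix.charpoly, ← Polynomial.coe_evalRingHom, RingHom.map_det]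
  congr 1
  ext i j
  by_cases h : i = j <;>
    simp [Matrix.charmatrix_apply, h, Matrix.one_apply, Matrix.diagonal_apply,
      Matrix.smul_apply, Matrix.sub_apply]

lemma detA (u D : ℂ) : (twA u D).det = u ^ 2 := by
  simp [twA, Matrix.det_succ_row_zero, Fin.sum_univ_succ]; ring

lemma detB (u D : ℂ) : (twB u D).det = u ^ 2 := by
  simp [twB, Matrix.det_succ_row_zero, Fin.sum_univ_succ]; ring

lemma key (u D t : ℂ) (hu : u ≠ 0) :
    Polynomial.eval t (twA u D * (twB u D)⁻¹).charpoly
      = (t • twB u D - twA u D).det / u ^ 2 := by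
  have hB : IsUnit (twB u D).det := by rw [detB]; exact (hu.isUnit.pow 2)
  rw [eval_charpoly']
  have h : t • (1 : Matrix (Fin 4) (Fin 4) ℂ) - twA u D * (twB u D)⁻¹
      = (t • twB u D - twA u D) * (twB u D)⁻¹ := by
    rw [sub_mul, Matrix.smul_mul, Matrix.mul_nonsing_inv _ hB]
  rw [h, Matrix.det_mul, Matrix.det_nonsing_inv, detB, div_eq_mul_inv, Ring.inverse_eq_inv']

theorem stmt7 (u D : ℂ) (hu : u ≠ 0) (hD : D = 1 ∨ D = -1) :
    IsUnit (twA u D) ∧ IsUnit (twB u D) ∧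
      (D = -1 → ∀ t : ℂ,
        Polynomial.eval t (twA u D * (twB u D)⁻¹).charpoly = p₁ u t / u ^ 2) ∧
      (D = 1 → ∀ t : ℂ,
        Polynomial.eval t (twA u D * (twB u D)⁻¹).charpoly = p₁ (-u) t / u ^ 2) := by
  refine ⟨?_, ?_, ?_, ?_⟩
  · rw [Matrix.isUnit_iff_isUnit_det, detA]; exact hu.isUnit.pow 2
  · rw [Matrix.isUnit_iff_isUnit_det, detB]; exact hu.isUnit.pow 2
  · rintro rfl t
    rw [key _ _ _ hu]
    congr 1
    simp [twA, twB, Matrix.det_succ_row_zero, Fin.sum_univ_succ, Matrix.smul_apply, Matrix.sub_apply, p₁, Fin.succAbove, Fin.castSucc, Fin.castAdd, Fin.castLE]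
    ring
  · rintro rfl t
    rw [key _ _ _ hu]
    congr 1
    simp [twA, twB, Matrix.det_succ_row_zero, Fin.sum_univ_succ, Matrix.smul_apply, Matrix.sub_apply, p₁, Fin.succAbove, Fin.castSucc, Fin.castAdd, Fin.castLE]
    ring
end

section
/- For u ∈ ℂ, u ≠ 0, and D ∈ {1, −1}, define 4×4 complex matrices A = [[1, −(D⁻²+D⁻¹+1), (D⁻²+D⁻¹+1)u, −u], [0, −1, (D⁻¹+1)u, −u], [0, 0, u, −u], [0, 0, 0, −u]] and B = [[−u, 0, 0, 0], [−u, u, 0, 0], [−D, D+1, −1, 0], [−D³, D³+D²+D, −D²−D−1, 1]]. If u is a primitive n-th root of unity with n ∉ {1, 2, 3, 4, 5, 6, 10}, then the subgroup of GL(4,ℂ) generated by A and B is infinite. -/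
open Polynomial Matrix

/-! ### Trace bound for finite-order matrices -/

lemma tw_eval_charpoly (M : Matrix (Fin 4) (Fin 4) ℂ) (x : ℂ) :
    (M.charpoly).eval x = (x • (1 : Matrix (Fin 4) (Fin 4) ℂ) - M).det := by
  have hdef : M.charpoly = (charmatrix M).det := rfl
  rw [hdef, ← Polynomial.coe_evalRingHom, RingHom.map_det]
  congr 1
  ext i j
  by_cases h : i = j
  · subst h
    simp [charmatrix_apply_eq, Matrix.one_apply, RingHom.mapMatrix_apply]
  · simp [charmatrix_apply_ne _ _ _ h, Matrix.one_apply, h, RingHom.mapMatrix_apply]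

lemma tw_root_pow_eq_one {M : Matrix (Fin 4) (Fin 4) ℂ} {m : ℕ} (hm : 0 < m)
    (hM : M ^ m = 1) {x : ℂ} (hx : x ∈ M.charpoly.roots) : x ^ m = 1 := by
  have hroot : M.charpoly.eval x = 0 := (Polynomial.mem_roots'.mp hx).2
  rw [tw_eval_charpoly] at hroot
  have hc : Commute (x • (1 : Matrix (Fin 4) (Fin 4) ℂ)) M := (Commute.one_left M).smul_left x
  have h2 : (x ^ m - 1) • (1 : Matrix (Fin 4) (Fin 4) ℂ)
      = (∑ i ∈ Finset.range m,
          (x • (1 : Matrix (Fin 4) (Fin 4) ℂ)) ^ i * M ^ (m - 1 - i))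
        * (x • (1 : Matrix (Fin 4) (Fin 4) ℂ) - M) := by
    rw [hc.geom_sum₂_mul m, hM, _root_.smul_pow, one_pow, sub_smul, one_smul]
  have hdet := congrArg Matrix.det h2
  rw [Matrix.det_mul, hroot, mul_zero, Matrix.det_smul, Matrix.det_one, mul_one] at hdet
  have h4 : (x ^ m - 1) ^ (4 : ℕ) = 0 := by simpa using hdet
  have h5 := pow_eq_zero_iff (n := 4) (by norm_num) |>.mp h4
  linear_combination h5

lemma tw_trace_bound (M : Matrix (Fin 4) (Fin 4) ℂ) {m : ℕ} (hm : 0 < m) (hM : M ^ m = 1) :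
    ‖M.trace‖ ≤ 4 := by
  have h1 : M.trace = M.charpoly.roots.sum := Matrix.trace_eq_sum_roots_charpoly M
  have hs : M.charpoly.Splits := IsAlgClosed.splits _
  have hcard : M.charpoly.roots.card = 4 := by
    rw [(Polynomial.splits_iff_card_roots).mp hs, Matrix.charpoly_natDegree_eq_dim]
    simp
  rw [h1]
  refine le_trans (norm_multiset_sum_le _) ?_
  have hle : ∀ y ∈ M.charpoly.roots.map (fun x : ℂ => ‖x‖), y ≤ 1 := by
    intro y hy
    obtain ⟨x, hx, rfl⟩ := Multiset.mem_map.mp hy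
    have hxm : x ^ m = 1 := tw_root_pow_eq_one hm hM hx
    have hnx : ‖x‖ ^ m = 1 := by rw [← norm_pow, hxm, norm_one]
    have h0 : (0 : ℝ) ≤ ‖x‖ := norm_nonneg x
    by_contra hne
    push_neg at hne
    have hgt : 1 < ‖x‖ := hne
    have := one_lt_pow₀ hgt hm.ne'
    rw [hnx] at this
    exact lt_irrefl _ this
  refine le_trans (Multiset.sum_le_card_nsmul _ 1 hle) ?_
  simp [hcard]

/-! ### Finite subgroups have elements of finite order -/

lemma tw_exists_pow_eq_one_of_finite {G : Type*} [Group G] {H : Subgroup G}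
    (hfin : (H : Set G).Finite) {g : G} (hg : g ∈ H) : ∃ m : ℕ, 0 < m ∧ g ^ m = 1 := by
  have hmem : ∀ i : ℕ, g ^ i ∈ (H : Set G) := fun i => pow_mem hg i
  have hni : ¬ Function.Injective (fun i : ℕ => g ^ i) := by
    intro hinj
    exact (Set.infinite_range_of_injective hinj).mono
      (by rintro x ⟨i, rfl⟩; exact hmem i) hfin
  obtain ⟨i, j, hij, hne⟩ := Function.not_injective_iff.mp hni
  rcases hne.lt_or_gt with h | h
  · refine ⟨j - i, by omega, ?_⟩
    have hkey : g ^ (j - i) * g ^ i = (1 : G) * g ^ i := by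
      rw [← pow_add, one_mul]
      have heq : j - i + i = j := by omega
      rw [heq, ← hij]
    exact mul_right_cancel hkey
  · refine ⟨i - j, by omega, ?_⟩
    have hkey : g ^ (i - j) * g ^ j = (1 : G) * g ^ j := by
      rw [← pow_add, one_mul]
      have heq : i - j + j = i := by omega
      rw [heq, hij]
    exact mul_right_cancel hkey

/-! ### Choosing a good Galois conjugate -/

lemma tw_exists_good_k (n : ℕ) (h7 : 7 ≤ n) (h10 : n ≠ 10) :
    ∃ k : ℕ, Nat.Coprime k n ∧ n < 3 * k ∧ 2 * k < n := by
  by_cases hodd : n % 2 = 1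
  · refine ⟨n / 2, ?_, by omega, by omega⟩
    have hdk := Nat.gcd_dvd_left (n / 2) n
    have hdn := Nat.gcd_dvd_right (n / 2) n
    have hd1 : Nat.gcd (n / 2) n ∣ n - 2 * (n / 2) := Nat.dvd_sub hdn (hdk.mul_left 2)
    have hsub : n - 2 * (n / 2) = 1 := by omega
    rw [hsub] at hd1
    exact Nat.dvd_one.mp hd1
  · by_cases h4 : n % 4 = 0
    · refine ⟨n / 2 - 1, ?_, by omega, by omega⟩
      have hdk := Nat.gcd_dvd_left (n / 2 - 1) n
      have hdn := Nat.gcd_dvd_right (n / 2 - 1) n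
      have hd2 : Nat.gcd (n / 2 - 1) n ∣ n - 2 * (n / 2 - 1) :=
        Nat.dvd_sub hdn (hdk.mul_left 2)
      have hsub : n - 2 * (n / 2 - 1) = 2 := by omega
      rw [hsub] at hd2
      rcases (Nat.dvd_prime Nat.prime_two).mp hd2 with h | h
      · exact h
      · exfalso; rw [h] at hdk; omega
    · refine ⟨n / 2 - 2, ?_, by omega, by omega⟩
      have hdk := Nat.gcd_dvd_left (n / 2 - 2) n
      have hdn := Nat.gcd_dvd_right (n / 2 - 2) n
      have hd4 : Nat.gcd (n / 2 - 2) n ∣ n - 2 * (n / 2 - 2) :=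
        Nat.dvd_sub hdn (hdk.mul_left 2)
      have hsub : n - 2 * (n / 2 - 2) = 4 := by omega
      rw [hsub] at hd4
      obtain ⟨d, hd⟩ : ∃ d, Nat.gcd (n / 2 - 2) n = d := ⟨_, rfl⟩
      rw [hd] at hdk hdn hd4
      have hpos : 0 < d := by
        rcases Nat.eq_zero_or_pos d with rfl | h
        · omega
        · exact h
      have hle : d ≤ 4 := Nat.le_of_dvd (by norm_num) hd4
      show Nat.gcd (n / 2 - 2) n = 1
      rw [hd]
      interval_cases d
      · rfl
      · omega
      · omega
      · omega

/-! ### The explicit matrices `N = A * B⁻¹` and `N²`, for `D = 1` and `D = -1` -/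

section ExplicitMatrices

variable {F : Type*} [Field F]

/-- Explicit inverse of `twB u 1`. -/
noncomputable def twBinv₁ (w : ℂ) : Matrix (Fin 4) (Fin 4) ℂ :=
  !![-w⁻¹, 0, 0, 0;
     -w⁻¹, w⁻¹, 0, 0;
     -w⁻¹, 2 * w⁻¹, -1, 0;
     -w⁻¹, 3 * w⁻¹, -3, 1]

/-- Explicit inverse of `twB u (-1)`. -/
noncomputable def twBinv₂ (w : ℂ) : Matrix (Fin 4) (Fin 4) ℂ :=
  !![-w⁻¹, 0, 0, 0;
     -w⁻¹, w⁻¹, 0, 0;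
     -w⁻¹, 0, -1, 0;
     -w⁻¹, w⁻¹, -1, 1]

/-- `twA w 1 * (twB w 1)⁻¹`, over a general field. -/
noncomputable def twN₁ (w : F) : Matrix (Fin 4) (Fin 4) F :=
  !![-2 + 2 * w⁻¹, 3 - 3 * w⁻¹, 0, -w;
     -1 + w⁻¹, 1 - w⁻¹, w, -w;
     0, -1, 2 * w, -w;
     1, -3, 3 * w, -w]

/-- `twA w (-1) * (twB w (-1))⁻¹`, over a general field. -/
noncomputable def twN₂ (w : F) : Matrix (Fin 4) (Fin 4) F :=
  !![0, -1 - w⁻¹, 0, -w;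
     1 + w⁻¹, -1 - w⁻¹, w, -w;
     0, -1, 0, -w;
     1, -1, w, -w]

/-- Square of `twN₁`. -/
noncomputable def twN₁sq (w : ℂ) : Matrix (Fin 4) (Fin 4) ℂ :=
  !![-w + 1 - 2 * w⁻¹ + w⁻¹ ^ 2, 3 * w - 3 + 6 * w⁻¹ - 3 * w⁻¹ ^ 2,
       -3 * w ^ 2 + 3 * w - 3, w ^ 2 - w + 1;
     -w + 1 - 2 * w⁻¹ + w⁻¹ ^ 2, 2 * w - 2 + 4 * w⁻¹ - 2 * w⁻¹ ^ 2,
       -w ^ 2 + w - 1, 0;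
     -w + 1 - w⁻¹, w - 1 + w⁻¹, w ^ 2 - w, -w ^ 2 + w;
     -w + 1 - w⁻¹, 0, 3 * w ^ 2 - 3 * w, -2 * w ^ 2 + 2 * w]

/-- Square of `twN₂`. -/
noncomputable def twN₂sq (w : ℂ) : Matrix (Fin 4) (Fin 4) ℂ :=
  !![-w - 1 - 2 * w⁻¹ - w⁻¹ ^ 2, w + 1 + 2 * w⁻¹ + w⁻¹ ^ 2,
       -w ^ 2 - w - 1, w ^ 2 + w + 1;
     -w - 1 - 2 * w⁻¹ - w⁻¹ ^ 2, 0, -w ^ 2 - w - 1, 0;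
     -w - 1 - w⁻¹, w + 1 + w⁻¹, -w ^ 2 - w, w ^ 2 + w;
     -w - 1 - w⁻¹, 0, -w ^ 2 - w, 0]

set_option maxHeartbeats 1000000 in
lemma twB₁_mul_inv (w : ℂ) (hw : w ≠ 0) : twB w 1 * twBinv₁ w = 1 := by
  ext i j
  fin_cases i <;> fin_cases j <;>
    norm_num [twB, twBinv₁, Matrix.mul_apply, Fin.sum_univ_four, Matrix.one_apply, Fin.ext_iff, Matrix.vecHead, Matrix.vecTail, Function.comp, Matrix.cons_val_two, Matrix.cons_val_three] <;>
    (try field_simp) <;> (try ring)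

set_option maxHeartbeats 1000000 in
lemma twB₂_mul_inv (w : ℂ) (hw : w ≠ 0) : twB w (-1) * twBinv₂ w = 1 := by
  ext i j
  fin_cases i <;> fin_cases j <;>
    norm_num [twB, twBinv₂, Matrix.mul_apply, Fin.sum_univ_four, Matrix.one_apply, Fin.ext_iff, Matrix.vecHead, Matrix.vecTail, Function.comp, Matrix.cons_val_two, Matrix.cons_val_three] <;>
    (try field_simp) <;> (try ring)

set_option maxHeartbeats 1000000 in
lemma twA₁_mul_Binv (w : ℂ) (hw : w ≠ 0) : twA w 1 * twBinv₁ w = twN₁ w := by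
  ext i j
  fin_cases i <;> fin_cases j <;>
    norm_num [twA, twBinv₁, twN₁, Matrix.mul_apply, Fin.sum_univ_four, Matrix.one_apply, Fin.ext_iff, Matrix.vecHead, Matrix.vecTail, Function.comp, Matrix.cons_val_two, Matrix.cons_val_three] <;>
    (try field_simp) <;> (try ring)

set_option maxHeartbeats 1000000 in
lemma twA₂_mul_Binv (w : ℂ) (hw : w ≠ 0) : twA w (-1) * twBinv₂ w = twN₂ w := by
  ext i j
  fin_cases i <;> fin_cases j <;>
    norm_num [twA, twBinv₂, twN₂, Matrix.mul_apply, Fin.sum_univ_four, Matrix.one_apply, Fin.ext_iff, Matrix.vecHead, Matrix.vecTail, Function.comp, Matrix.cons_val_two, Matrix.cons_val_three] <;>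
    (try field_simp) <;> (try ring)

set_option maxHeartbeats 1000000 in
lemma twN₁_sq (w : ℂ) (hw : w ≠ 0) : twN₁ w * twN₁ w = twN₁sq w := by
  ext i j
  fin_cases i <;> fin_cases j <;>
    norm_num [twN₁, twN₁sq, Matrix.mul_apply, Fin.sum_univ_four, Matrix.one_apply, Fin.ext_iff, Matrix.vecHead, Matrix.vecTail, Function.comp, Matrix.cons_val_two, Matrix.cons_val_three] <;>
    (try field_simp) <;> (try ring)

set_option maxHeartbeats 1000000 in
lemma twN₂_sq (w : ℂ) (hw : w ≠ 0) : twN₂ w * twN₂ w = twN₂sq w := by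
  ext i j
  fin_cases i <;> fin_cases j <;>
    norm_num [twN₂, twN₂sq, Matrix.mul_apply, Fin.sum_univ_four, Matrix.one_apply, Fin.ext_iff, Matrix.vecHead, Matrix.vecTail, Function.comp, Matrix.cons_val_two, Matrix.cons_val_three] <;>
    (try field_simp) <;> (try ring)

set_option maxHeartbeats 1000000 in
lemma twN₁_trace_cube (w : ℂ) (hw : w ≠ 0) :
    (twN₁sq w * twN₁ w).trace
      = -2 * (w + w⁻¹) ^ 3 + 6 * (w + w⁻¹) ^ 2 - 4 := by
  norm_num [twN₁, twN₁sq, Matrix.trace, Matrix.diag, Matrix.mul_apply, Fin.sum_univ_four, Matrix.one_apply, Fin.ext_iff, Matrix.vecHead, Matrix.vecTail, Function.comp, Matrix.cons_val_two, Matrix.cons_val_three]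
  field_simp
  ring

set_option maxHeartbeats 1000000 in
lemma twN₂_trace_cube (w : ℂ) (hw : w ≠ 0) :
    (twN₂sq w * twN₂ w).trace
      = 2 * (w + w⁻¹) ^ 3 + 6 * (w + w⁻¹) ^ 2 - 4 := by
  norm_num [twN₂, twN₂sq, Matrix.trace, Matrix.diag, Matrix.mul_apply, Fin.sum_univ_four, Matrix.one_apply, Fin.ext_iff, Matrix.vecHead, Matrix.vecTail, Function.comp, Matrix.cons_val_two, Matrix.cons_val_three]
  field_simp
  ring

lemma twA₁_det (w : ℂ) : (twA w 1).det = w ^ 2 := by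
  norm_num [twA, Matrix.det_succ_row_zero, Fin.sum_univ_succ, Matrix.cons_val_two, Matrix.cons_val_three]
  ring

lemma twA₂_det (w : ℂ) : (twA w (-1)).det = w ^ 2 := by
  norm_num [twA, Matrix.det_succ_row_zero, Fin.sum_univ_succ, Matrix.cons_val_two, Matrix.cons_val_three]
  ring

lemma twN₁_map {K : Type*} [Field K] (f : F →+* K) (w : F) :
    (twN₁ w).map f = twN₁ (f w) := by
  ext i j
  fin_cases i <;> fin_cases j <;>
    norm_num [twN₁, Matrix.map_apply, map_inv₀, map_ofNat]

lemma twN₂_map {K : Type*} [Field K] (f : F →+* K) (w : F) :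
    (twN₂ w).map f = twN₂ (f w) := by
  ext i j
  fin_cases i <;> fin_cases j <;>
    norm_num [twN₂, Matrix.map_apply, map_inv₀, map_ofNat]

end ExplicitMatrices

/-! ### Galois transfer -/

lemma tw_aeval_cyclo {n : ℕ} (hn0 : 0 < n) {w : ℂ} (hw : IsPrimitiveRoot w n) :
    (Polynomial.aeval w) (Polynomial.cyclotomic n ℚ) = 0 := by
  rw [Polynomial.aeval_def, ← Polynomial.eval_map, Polynomial.map_cyclotomic]
  exact hw.isRoot_cyclotomic hn0

lemma tw_transfer {n : ℕ} (hn0 : 0 < n) {u z : ℂ} (hu : IsPrimitiveRoot u n)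
    (hz : IsPrimitiveRoot z n)
    (Nq : Matrix (Fin 4) (Fin 4) (AdjoinRoot (Polynomial.cyclotomic n ℚ)))
    {Mu Mz : Matrix (Fin 4) (Fin 4) ℂ} (m : ℕ)
    (hMu : Nq.map (AdjoinRoot.liftAlgHom _ (Algebra.ofId ℚ ℂ) u (tw_aeval_cyclo hn0 hu)).toRingHom = Mu)
    (hMz : Nq.map (AdjoinRoot.liftAlgHom _ (Algebra.ofId ℚ ℂ) z (tw_aeval_cyclo hn0 hz)).toRingHom = Mz)
    (h : Mu ^ m = 1) : Mz ^ m = 1 := by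
  haveI : Fact (Irreducible (Polynomial.cyclotomic n ℚ)) :=
    ⟨Polynomial.cyclotomic.irreducible_rat hn0⟩
  have hinj : Function.Injective
      ((AdjoinRoot.liftAlgHom _ (Algebra.ofId ℚ ℂ) u (tw_aeval_cyclo hn0 hu)).toRingHom) :=
    RingHom.injective _
  have hq : Nq ^ m = 1 := by
    have hmapinj : Function.Injective
        (((AdjoinRoot.liftAlgHom _ (Algebra.ofId ℚ ℂ) u (tw_aeval_cyclo hn0 hu)).toRingHom).mapMatrix :
          Matrix (Fin 4) (Fin 4) (AdjoinRoot (Polynomial.cyclotomic n ℚ)) →+*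
            Matrix (Fin 4) (Fin 4) ℂ) := by
      intro X Y hXY
      ext i j
      apply hinj
      have h2 := congrFun (congrFun (congrArg
        (fun M : Matrix (Fin 4) (Fin 4) ℂ => M) hXY) i) j
      simpa [RingHom.mapMatrix_apply, Matrix.map_apply] using h2
    apply hmapinj
    rw [_root_.map_pow, _root_.map_one, RingHom.mapMatrix_apply, hMu, h]
  have h3 := congrArg
    (fun X => ((AdjoinRoot.liftAlgHom _ (Algebra.ofId ℚ ℂ) z (tw_aeval_cyclo hn0 hz)).toRingHom).mapMatrix X) hq
  simp only [_root_.map_pow, _root_.map_one] at h3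
  rw [RingHom.mapMatrix_apply, hMz] at h3
  exact h3

/-! ### Trigonometric estimates -/

lemma tw_cos_lt (n k : ℕ) (hn0 : 0 < n) (h3k : n < 3 * k) (h2k : 2 * k < n) :
    Real.cos (2 * Real.pi * k / n) < -(1 / 2) := by
  have hpi := Real.pi_pos
  have hnr : (0 : ℝ) < n := by exact_mod_cast hn0
  have hkn : (n : ℝ) < 3 * k := by exact_mod_cast h3k
  have hkn2 : 2 * (k : ℝ) < n := by exact_mod_cast h2k
  have h1 : 2 * Real.pi / 3 < 2 * Real.pi * k / n := by
    rw [div_lt_div_iff₀ (by norm_num) hnr]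
    nlinarith
  have h2 : 2 * Real.pi * k / n ≤ Real.pi := by
    rw [div_le_iff₀ hnr]
    nlinarith
  have h3 := Real.cos_lt_cos_of_nonneg_of_le_pi (by positivity) h2 h1
  have h4 : Real.cos (2 * Real.pi / 3) = -(1 / 2) := by
    have he : 2 * Real.pi / 3 = Real.pi - Real.pi / 3 := by ring
    rw [he, Real.cos_pi_sub, Real.cos_pi_div_three]
  linarith

lemma tw_cos_gt (n : ℕ) (h7 : 7 ≤ n) :
    (1 : ℝ) / 2 < Real.cos (2 * Real.pi / n) := by
  have hpi := Real.pi_pos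
  have hnr : (0 : ℝ) < n := by
    have : (0 : ℝ) < 7 := by norm_num
    have h7r : (7 : ℝ) ≤ n := by exact_mod_cast h7
    linarith
  have h7r : (7 : ℝ) ≤ n := by exact_mod_cast h7
  have h1 : 2 * Real.pi / n < Real.pi / 3 := by
    rw [div_lt_div_iff₀ hnr (by norm_num)]
    nlinarith
  have h3 := Real.cos_lt_cos_of_nonneg_of_le_pi (by positivity) (by linarith) h1
  rw [Real.cos_pi_div_three] at h3
  exact h3

/-! ### The two main cases -/

lemma tw_case1 (u : ℂ) (hu : u ≠ 0) (n : ℕ) (hprim : IsPrimitiveRoot u n)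
    (hn : n ∉ ({1, 2, 3, 4, 5, 6, 10} : Set ℕ)) :
    Set.Infinite (matGenGroup (twA u 1) (twB u 1) : Set (Matrix (Fin 4) (Fin 4) ℂ)ˣ) := by
  intro hfin
  have hB := twB₁_mul_inv u hu
  set uB : (Matrix (Fin 4) (Fin 4) ℂ)ˣ :=
    ⟨twB u 1, twBinv₁ u, hB, mul_eq_one_comm.mp hB⟩ with huB
  have hAu : IsUnit (twA u 1) := by
    rw [Matrix.isUnit_iff_isUnit_det, twA₁_det]
    exact (pow_ne_zero 2 hu).isUnit
  have hBmem : uB ∈ matGenGroup (twA u 1) (twB u 1) :=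
    Subgroup.subset_closure (Or.inr rfl)
  have hAmem : hAu.unit ∈ matGenGroup (twA u 1) (twB u 1) :=
    Subgroup.subset_closure (Or.inl hAu.unit_spec)
  rcases Nat.eq_zero_or_pos n with rfl | hn0
  · obtain ⟨m, hm0, hm⟩ := tw_exists_pow_eq_one_of_finite hfin hAmem
    have hmat : (twA u 1) ^ m = 1 := by
      have h1 := congrArg (fun g : (Matrix (Fin 4) (Fin 4) ℂ)ˣ =>
        (g : Matrix (Fin 4) (Fin 4) ℂ)) hm
      simpa [Units.val_pow_eq_pow_val, hAu.unit_spec] using h1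
    have hdet := congrArg Matrix.det hmat
    rw [Matrix.det_pow, twA₁_det, Matrix.det_one, ← pow_mul] at hdet
    have hdvd := (hprim.pow_eq_one_iff_dvd (2 * m)).mp hdet
    omega
  have hn7 : 7 ≤ n ∧ n ≠ 10 := by
    simp only [Set.mem_insert_iff, Set.mem_singleton_iff] at hn
    push_neg at hn
    omega
  obtain ⟨k, hcop, h3k, h2k⟩ := tw_exists_good_k n hn7.1 hn7.2
  obtain ⟨m, hm0, hm⟩ := tw_exists_pow_eq_one_of_finite hfin
    (mul_mem hAmem (inv_mem hBmem))
  have hval : ((hAu.unit * uB⁻¹ : (Matrix (Fin 4) (Fin 4) ℂ)ˣ) : Matrix (Fin 4) (Fin 4) ℂ)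
      = twN₁ u := by
    rw [Units.val_mul, hAu.unit_spec, huB, Units.inv_mk]
    exact twA₁_mul_Binv u hu
  have hMu : (twN₁ u) ^ m = 1 := by
    have h1 := congrArg (fun g : (Matrix (Fin 4) (Fin 4) ℂ)ˣ =>
      (g : Matrix (Fin 4) (Fin 4) ℂ)) hm
    simpa [Units.val_pow_eq_pow_val, hval] using h1
  haveI : Fact (Irreducible (Polynomial.cyclotomic n ℚ)) :=
    ⟨Polynomial.cyclotomic.irreducible_rat hn0⟩
  set θ : ℝ := 2 * Real.pi * k / n with hθ
  set z : ℂ := Complex.exp (2 * Real.pi * Complex.I / n) ^ k with hzdef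
  have hzprim : IsPrimitiveRoot z n :=
    (Complex.isPrimitiveRoot_exp n (by omega)).pow_of_coprime k hcop
  have hz0 : z ≠ 0 := pow_ne_zero _ (Complex.exp_ne_zero _)
  have hmapu : (twN₁ (AdjoinRoot.root (Polynomial.cyclotomic n ℚ))).map
      (AdjoinRoot.liftAlgHom _ (Algebra.ofId ℚ ℂ) u (tw_aeval_cyclo hn0 hprim)).toRingHom = twN₁ u := by
    rw [twN₁_map]
    congr 1
    simpa using AdjoinRoot.liftAlgHom_root _ (Algebra.ofId ℚ ℂ) u (tw_aeval_cyclo hn0 hprim)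
  have hmapz : (twN₁ (AdjoinRoot.root (Polynomial.cyclotomic n ℚ))).map
      (AdjoinRoot.liftAlgHom _ (Algebra.ofId ℚ ℂ) z (tw_aeval_cyclo hn0 hzprim)).toRingHom = twN₁ z := by
    rw [twN₁_map]
    congr 1
    simpa using AdjoinRoot.liftAlgHom_root _ (Algebra.ofId ℚ ℂ) z (tw_aeval_cyclo hn0 hzprim)
  have hNz : (twN₁ z) ^ m = 1 := tw_transfer hn0 hprim hzprim _ m hmapu hmapz hMu
  have hP : (twN₁sq z * twN₁ z) ^ m = 1 := by
    rw [← twN₁_sq z hz0]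
    have h3 : twN₁ z * twN₁ z * twN₁ z = (twN₁ z) ^ 3 := by
      rw [pow_succ, pow_two]
    rw [h3, ← pow_mul, mul_comm 3 m, pow_mul, hNz, one_pow]
  have hbound := tw_trace_bound _ hm0 hP
  have hzexp : z = Complex.exp ((θ : ℂ) * Complex.I) := by
    rw [hzdef, ← Complex.exp_nat_mul]
    congr 1
    rw [hθ]
    have hnne : (n : ℂ) ≠ 0 := Nat.cast_ne_zero.mpr (by omega)
    push_cast
    field_simp
    try ring
  have hv : z + z⁻¹ = ((2 * Real.cos θ : ℝ) : ℂ) := by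
    rw [hzexp, ← Complex.exp_neg, ← neg_mul, ← Complex.two_cos, Complex.ofReal_mul,
      Complex.ofReal_cos, Complex.ofReal_ofNat]
  have htrace : (twN₁sq z * twN₁ z).trace
      = ((-16 * Real.cos θ ^ 3 + 24 * Real.cos θ ^ 2 - 4 : ℝ) : ℂ) := by
    rw [twN₁_trace_cube z hz0, hv]
    push_cast
    ring
  have hcos := tw_cos_lt n k hn0 h3k h2k
  have hgt : (4 : ℝ) < -16 * Real.cos θ ^ 3 + 24 * Real.cos θ ^ 2 - 4 := by
    set c := Real.cos θ with hc
    have hneg : (0 : ℝ) < -(2 * c + 1) := by linarith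
    have hsq : (0 : ℝ) < (c - 1) ^ 2 := by nlinarith
    nlinarith [mul_pos hneg hsq]
  rw [htrace, Complex.norm_real, Real.norm_eq_abs] at hbound
  have hle := le_abs_self (-16 * Real.cos θ ^ 3 + 24 * Real.cos θ ^ 2 - 4 : ℝ)
  linarith

lemma tw_case2 (u : ℂ) (hu : u ≠ 0) (n : ℕ) (hprim : IsPrimitiveRoot u n)
    (hn : n ∉ ({1, 2, 3, 4, 5, 6, 10} : Set ℕ)) :
    Set.Infinite (matGenGroup (twA u (-1)) (twB u (-1)) : Set (Matrix (Fin 4) (Fin 4) ℂ)ˣ) := by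
  intro hfin
  have hB := twB₂_mul_inv u hu
  set uB : (Matrix (Fin 4) (Fin 4) ℂ)ˣ :=
    ⟨twB u (-1), twBinv₂ u, hB, mul_eq_one_comm.mp hB⟩ with huB
  have hAu : IsUnit (twA u (-1)) := by
    rw [Matrix.isUnit_iff_isUnit_det, twA₂_det]
    exact (pow_ne_zero 2 hu).isUnit
  have hBmem : uB ∈ matGenGroup (twA u (-1)) (twB u (-1)) :=
    Subgroup.subset_closure (Or.inr rfl)
  have hAmem : hAu.unit ∈ matGenGroup (twA u (-1)) (twB u (-1)) :=
    Subgroup.subset_closure (Or.inl hAu.unit_spec)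
  rcases Nat.eq_zero_or_pos n with rfl | hn0
  · obtain ⟨m, hm0, hm⟩ := tw_exists_pow_eq_one_of_finite hfin hAmem
    have hmat : (twA u (-1)) ^ m = 1 := by
      have h1 := congrArg (fun g : (Matrix (Fin 4) (Fin 4) ℂ)ˣ =>
        (g : Matrix (Fin 4) (Fin 4) ℂ)) hm
      simpa [Units.val_pow_eq_pow_val, hAu.unit_spec] using h1
    have hdet := congrArg Matrix.det hmat
    rw [Matrix.det_pow, twA₂_det, Matrix.det_one, ← pow_mul] at hdet
    have hdvd := (hprim.pow_eq_one_iff_dvd (2 * m)).mp hdet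
    omega
  have hn7 : 7 ≤ n := by
    simp only [Set.mem_insert_iff, Set.mem_singleton_iff] at hn
    push_neg at hn
    omega
  obtain ⟨m, hm0, hm⟩ := tw_exists_pow_eq_one_of_finite hfin
    (mul_mem hAmem (inv_mem hBmem))
  have hval : ((hAu.unit * uB⁻¹ : (Matrix (Fin 4) (Fin 4) ℂ)ˣ) : Matrix (Fin 4) (Fin 4) ℂ)
      = twN₂ u := by
    rw [Units.val_mul, hAu.unit_spec, huB, Units.inv_mk]
    exact twA₂_mul_Binv u hu
  have hMu : (twN₂ u) ^ m = 1 := by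
    have h1 := congrArg (fun g : (Matrix (Fin 4) (Fin 4) ℂ)ˣ =>
      (g : Matrix (Fin 4) (Fin 4) ℂ)) hm
    simpa [Units.val_pow_eq_pow_val, hval] using h1
  haveI : Fact (Irreducible (Polynomial.cyclotomic n ℚ)) :=
    ⟨Polynomial.cyclotomic.irreducible_rat hn0⟩
  set θ : ℝ := 2 * Real.pi / n with hθ
  set z : ℂ := Complex.exp (2 * Real.pi * Complex.I / n) with hzdef
  have hzprim : IsPrimitiveRoot z n := Complex.isPrimitiveRoot_exp n (by omega)
  have hz0 : z ≠ 0 := Complex.exp_ne_zero _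
  have hmapu : (twN₂ (AdjoinRoot.root (Polynomial.cyclotomic n ℚ))).map
      (AdjoinRoot.liftAlgHom _ (Algebra.ofId ℚ ℂ) u (tw_aeval_cyclo hn0 hprim)).toRingHom = twN₂ u := by
    rw [twN₂_map]
    congr 1
    simpa using AdjoinRoot.liftAlgHom_root _ (Algebra.ofId ℚ ℂ) u (tw_aeval_cyclo hn0 hprim)
  have hmapz : (twN₂ (AdjoinRoot.root (Polynomial.cyclotomic n ℚ))).map
      (AdjoinRoot.liftAlgHom _ (Algebra.ofId ℚ ℂ) z (tw_aeval_cyclo hn0 hzprim)).toRingHom = twN₂ z := by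
    rw [twN₂_map]
    congr 1
    simpa using AdjoinRoot.liftAlgHom_root _ (Algebra.ofId ℚ ℂ) z (tw_aeval_cyclo hn0 hzprim)
  have hNz : (twN₂ z) ^ m = 1 := tw_transfer hn0 hprim hzprim _ m hmapu hmapz hMu
  have hP : (twN₂sq z * twN₂ z) ^ m = 1 := by
    rw [← twN₂_sq z hz0]
    have h3 : twN₂ z * twN₂ z * twN₂ z = (twN₂ z) ^ 3 := by
      rw [pow_succ, pow_two]
    rw [h3, ← pow_mul, mul_comm 3 m, pow_mul, hNz, one_pow]
  have hbound := tw_trace_bound _ hm0 hP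
  have hzexp : z = Complex.exp ((θ : ℂ) * Complex.I) := by
    rw [hzdef]
    congr 1
    rw [hθ]
    have hnne : (n : ℂ) ≠ 0 := Nat.cast_ne_zero.mpr (by omega)
    push_cast
    field_simp
    try ring
  have hv : z + z⁻¹ = ((2 * Real.cos θ : ℝ) : ℂ) := by
    rw [hzexp, ← Complex.exp_neg, ← neg_mul, ← Complex.two_cos, Complex.ofReal_mul,
      Complex.ofReal_cos, Complex.ofReal_ofNat]
  have htrace : (twN₂sq z * twN₂ z).trace
      = ((16 * Real.cos θ ^ 3 + 24 * Real.cos θ ^ 2 - 4 : ℝ) : ℂ) := by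
    rw [twN₂_trace_cube z hz0, hv]
    push_cast
    ring
  have hcos : (1 : ℝ) / 2 < Real.cos θ := tw_cos_gt n hn7
  have hgt : (4 : ℝ) < 16 * Real.cos θ ^ 3 + 24 * Real.cos θ ^ 2 - 4 := by
    set c := Real.cos θ with hc
    have hneg : (0 : ℝ) < 2 * c - 1 := by linarith
    have hsq : (0 : ℝ) < (c + 1) ^ 2 := by nlinarith
    nlinarith [mul_pos hneg hsq]
  rw [htrace, Complex.norm_real, Real.norm_eq_abs] at hbound
  have hle := le_abs_self (16 * Real.cos θ ^ 3 + 24 * Real.cos θ ^ 2 - 4 : ℝ)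
  linarith

theorem stmt8 (u D : ℂ) (hu : u ≠ 0) (hD : D = 1 ∨ D = -1) (n : ℕ)
    (hprim : IsPrimitiveRoot u n) (hn : n ∉ ({1, 2, 3, 4, 5, 6, 10} : Set ℕ)) :
    Set.Infinite (matGenGroup (twA u D) (twB u D) : Set (Matrix (Fin 4) (Fin 4) ℂ)ˣ) := by
  rcases hD with rfl | rfl
  · exact tw_case1 u hu n hprim hn
  · exact tw_case2 u hu n hprim hn
end

section
/- For u ∈ ℂ, u ≠ 0, and D ∈ {1, −1}, define 4×4 complex matrices A = [[1, −(D⁻²+D⁻¹+1), (D⁻²+D⁻¹+1)u, −u], [0, −1, (D⁻¹+1)u, −u], [0, 0, u, −u], [0, 0, 0, −u]] and B = [[−u, 0, 0, 0], [−u, u, 0, 0], [−D, D+1, −1, 0], [−D³, D³+D²+D, −D²−D−1, 1]]. If either (D = 1 and u is a primitive 5th root of unity) or (D = −1 and u is a primitive 10th root of unity), then the subgroup of GL(4,ℂ) generated by A and B is infinite. -/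
set_option maxHeartbeats 1600000


theorem mul_fin_four {α} [AddCommMonoid α] [Mul α]
    (a₁₁ a₁₂ a₁₃ a₁₄ a₂₁ a₂₂ a₂₃ a₂₄ a₃₁ a₃₂ a₃₃ a₃₄ a₄₁ a₄₂ a₄₃ a₄₄
     b₁₁ b₁₂ b₁₃ b₁₄ b₂₁ b₂₂ b₂₃ b₂₄ b₃₁ b₃₂ b₃₃ b₃₄ b₄₁ b₄₂ b₄₃ b₄₄ : α) :
    !![a₁₁, a₁₂, a₁₃, a₁₄;
       a₂₁, a₂₂, a₂₃, a₂₄;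
       a₃₁, a₃₂, a₃₃, a₃₄;
       a₄₁, a₄₂, a₄₃, a₄₄] * !![b₁₁, b₁₂, b₁₃, b₁₄;
                                b₂₁, b₂₂, b₂₃, b₂₄;
                                b₃₁, b₃₂, b₃₃, b₃₄;
                                b₄₁, b₄₂, b₄₃, b₄₄] =
    !![a₁₁*b₁₁ + a₁₂*b₂₁ + a₁₃*b₃₁ + a₁₄*b₄₁, a₁₁*b₁₂ + a₁₂*b₂₂ + a₁₃*b₃₂ + a₁₄*b₄₂,
         a₁₁*b₁₃ + a₁₂*b₂₃ + a₁₃*b₃₃ + a₁₄*b₄₃, a₁₁*b₁₄ + a₁₂*b₂₄ + a₁₃*b₃₄ + a₁₄*b₄₄;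
       a₂₁*b₁₁ + a₂₂*b₂₁ + a₂₃*b₃₁ + a₂₄*b₄₁, a₂₁*b₁₂ + a₂₂*b₂₂ + a₂₃*b₃₂ + a₂₄*b₄₂,
         a₂₁*b₁₃ + a₂₂*b₂₃ + a₂₃*b₃₃ + a₂₄*b₄₃, a₂₁*b₁₄ + a₂₂*b₂₄ + a₂₃*b₃₄ + a₂₄*b₄₄;
       a₃₁*b₁₁ + a₃₂*b₂₁ + a₃₃*b₃₁ + a₃₄*b₄₁, a₃₁*b₁₂ + a₃₂*b₂₂ + a₃₃*b₃₂ + a₃₄*b₄₂,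
         a₃₁*b₁₃ + a₃₂*b₂₃ + a₃₃*b₃₃ + a₃₄*b₄₃, a₃₁*b₁₄ + a₃₂*b₂₄ + a₃₃*b₃₄ + a₃₄*b₄₄;
       a₄₁*b₁₁ + a₄₂*b₂₁ + a₄₃*b₃₁ + a₄₄*b₄₁, a₄₁*b₁₂ + a₄₂*b₂₂ + a₄₃*b₃₂ + a₄₄*b₄₂,
         a₄₁*b₁₃ + a₄₂*b₂₃ + a₄₃*b₃₃ + a₄₄*b₄₃, a₄₁*b₁₄ + a₄₂*b₂₄ + a₄₃*b₃₄ + a₄₄*b₄₄] := by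
  ext i j
  fin_cases i <;> fin_cases j
    <;> simp [Matrix.mul_apply, Fin.sum_univ_succ, ← add_assoc]

/-- If a `4 × 4` complex matrix has finite (multiplicative) order, then all eigenvalues are
roots of unity, hence the trace has modulus at most `4`. -/
lemma absTrace_le_four {M : Matrix (Fin 4) (Fin 4) ℂ} {k : ℕ} (hk : k ≠ 0) (hM : M ^ k = 1) :
    ‖M.trace‖ ≤ 4 := by
  have hsp : M.charpoly.Splits := IsAlgClosed.splits _
  have hdeg : M.charpoly.natDegree = 4 := by simpa using M.charpoly_natDegree_eq_dim
  have hcard : Multiset.card M.charpoly.roots = 4 :=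
    (Polynomial.splits_iff_card_roots.mp hsp).trans hdeg
  have habs : ∀ x ∈ M.charpoly.roots, ‖x‖ = 1 := by
    intro x hx
    have hroot : M.charpoly.IsRoot x := Polynomial.isRoot_of_mem_roots hx
    have hdet : (x • (1 : Matrix (Fin 4) (Fin 4) ℂ) - M).det = 0 := by
      have heval : M.charpoly.eval x = (x • (1 : Matrix (Fin 4) (Fin 4) ℂ) - M).det := by
        rw [Matrix.charpoly, ← Polynomial.coe_evalRingHom, RingHom.map_det]
        congr 1
        ext i j
        rcases eq_or_ne i j with rfl | hij
        · simp [Matrix.charmatrix_apply_eq, Matrix.one_apply]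
        · simp [Matrix.charmatrix_apply_ne _ _ _ hij, Matrix.one_apply, hij]
      rw [← heval]; exact hroot
    have hcomm : Commute (x • (1 : Matrix (Fin 4) (Fin 4) ℂ)) M :=
      (Commute.one_left M).smul_left x
    obtain ⟨Cm, hC⟩ := hcomm.sub_dvd_pow_sub_pow k
    have hpow : (x • (1 : Matrix (Fin 4) (Fin 4) ℂ)) ^ k - M ^ k
        = (x ^ k - 1) • (1 : Matrix (Fin 4) (Fin 4) ℂ) := by
      rw [_root_.smul_pow, one_pow, hM, sub_smul, one_smul]
    have hdet2 : ((x ^ k - 1) • (1 : Matrix (Fin 4) (Fin 4) ℂ)).det = 0 := by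
      rw [← hpow, hC, Matrix.det_mul, hdet, zero_mul]
    rw [Matrix.det_smul, Matrix.det_one, mul_one] at hdet2
    have hxk : x ^ k = 1 := by
      have h4 : (x ^ k - 1) = 0 := by
        have hc4 : Fintype.card (Fin 4) ≠ 0 := by simp
        exact pow_eq_zero_iff hc4 |>.mp hdet2
      exact sub_eq_zero.mp h4
    have habsk : ‖x‖ ^ k = 1 := by
      rw [← norm_pow, hxk, norm_one]
    rcases lt_trichotomy (‖x‖) 1 with hlt | heq | hgt
    · exact absurd habsk (by have := pow_lt_one₀ (norm_nonneg x) hlt hk; linarith)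
    · exact heq
    · exact absurd habsk (by have := one_lt_pow₀ hgt hk; linarith)
  rw [Matrix.trace_eq_sum_roots_charpoly]
  calc ‖M.charpoly.roots.sum‖ ≤ (M.charpoly.roots.map (fun x => ‖x‖)).sum := by
        simpa using norm_multiset_sum_le M.charpoly.roots
    _ = 4 := by
        rw [Multiset.map_congr rfl habs]
        simp [hcard]
        norm_num

/-- If the generated group is not infinite, some positive power of `A⁴B⁴` is the identity. -/
lemma exists_pow_word_eq_one {A B : Matrix (Fin 4) (Fin 4) ℂ}
    (hA : IsUnit A.det) (hB : IsUnit B.det)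
    (hfin : ¬ Set.Infinite (matGenGroup A B : Set (Matrix (Fin 4) (Fin 4) ℂ)ˣ)) :
    ∃ k : ℕ, k ≠ 0 ∧ (A ^ 4 * B ^ 4) ^ k = 1 := by
  rw [Set.not_infinite] at hfin
  haveI : Finite (matGenGroup A B) := hfin.to_subtype
  have hA' : IsUnit A := (Matrix.isUnit_iff_isUnit_det A).mpr hA
  have hB' : IsUnit B := (Matrix.isUnit_iff_isUnit_det B).mpr hB
  have hgA : hA'.unit ∈ matGenGroup A B :=
    Subgroup.subset_closure (Or.inl hA'.unit_spec)
  have hgB : hB'.unit ∈ matGenGroup A B :=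
    Subgroup.subset_closure (Or.inr hB'.unit_spec)
  have hg : hA'.unit ^ 4 * hB'.unit ^ 4 ∈ matGenGroup A B :=
    mul_mem (pow_mem hgA 4) (pow_mem hgB 4)
  obtain ⟨k, hk0, hk⟩ :=
    (isOfFinOrder_of_finite (⟨_, hg⟩ : matGenGroup A B)).exists_pow_eq_one
  refine ⟨k, hk0.ne', ?_⟩
  have hu : (hA'.unit ^ 4 * hB'.unit ^ 4) ^ k = 1 := by
    have := congrArg (fun x : matGenGroup A B => (x : (Matrix (Fin 4) (Fin 4) ℂ)ˣ)) hk
    simpa using this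
  have hm := congrArg (fun x : (Matrix (Fin 4) (Fin 4) ℂ)ˣ => (x : Matrix (Fin 4) (Fin 4) ℂ)) hu
  simpa [Units.val_pow_eq_pow_val, hA'.unit_spec, hB'.unit_spec] using hm


lemma tw_case_one (u : ℂ) (hu : u ≠ 0) (hprim : IsPrimitiveRoot u 5) :
    Set.Infinite (matGenGroup (twA u 1) (twB u 1) : Set (Matrix (Fin 4) (Fin 4) ℂ)ˣ) := by
  by_contra hfin
  have htwA : twA u 1 = !![(1), (-3), (3)*u, (-1)*u;
       0, (-1), (2)*u, (-1)*u;
       0, 0, (1)*u, (-1)*u;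
       0, 0, 0, (-1)*u] := by
    unfold twA; norm_num
  have htwB : twB u 1 = !![(-1)*u, 0, 0, 0;
       (-1)*u, (1)*u, 0, 0;
       (-1), (2), (-1), 0;
       (-1), (3), (-3), (1)] := by
    unfold twB; norm_num
  have hdetA : IsUnit (twA u 1).det := by
    rw [htwA]
    have : (!![(1), (-3), (3)*u, (-1)*u;
       0, (-1), (2)*u, (-1)*u;
       0, 0, (1)*u, (-1)*u;
       0, 0, 0, (-1)*u] : Matrix (Fin 4) (Fin 4) ℂ).det = u^2 := by
      simp [Matrix.det_succ_row_zero, Fin.sum_univ_succ]; ring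
    rw [this]; exact (IsUnit.pow 2 (Ne.isUnit hu))
  have hdetB : IsUnit (twB u 1).det := by
    rw [htwB]
    have : (!![(-1)*u, 0, 0, 0;
       (-1)*u, (1)*u, 0, 0;
       (-1), (2), (-1), 0;
       (-1), (3), (-3), (1)] : Matrix (Fin 4) (Fin 4) ℂ).det = u^2 := by
      simp [Matrix.det_succ_row_zero, Fin.sum_univ_succ]; ring
    rw [this]; exact (IsUnit.pow 2 (Ne.isUnit hu))
  obtain ⟨k, hk0, hWk⟩ := exists_pow_word_eq_one hdetA hdetB hfin
  rw [htwA, htwB] at hWk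
  -- polynomial matrices over ℚ[X]
  set Ap : Matrix (Fin 4) (Fin 4) (Polynomial ℚ) := !![(1), (-3), (3)*Polynomial.X, (-1)*Polynomial.X;
       0, (-1), (2)*Polynomial.X, (-1)*Polynomial.X;
       0, 0, (1)*Polynomial.X, (-1)*Polynomial.X;
       0, 0, 0, (-1)*Polynomial.X] with hAp
  set Bp : Matrix (Fin 4) (Fin 4) (Polynomial ℚ) := !![(-1)*Polynomial.X, 0, 0, 0;
       (-1)*Polynomial.X, (1)*Polynomial.X, 0, 0;
       (-1), (2), (-1), 0;
       (-1), (3), (-3), (1)] with hBp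
  have hmapA : ∀ v : ℂ, ((Polynomial.aeval v).toRingHom : Polynomial ℚ →+* ℂ).mapMatrix Ap
      = !![(1), (-3), (3)*v, (-1)*v;
       0, (-1), (2)*v, (-1)*v;
       0, 0, (1)*v, (-1)*v;
       0, 0, 0, (-1)*v] := by
    intro v; ext i j; fin_cases i <;> fin_cases j <;>
      simp [hAp, RingHom.mapMatrix_apply, Matrix.map_apply, map_ofNat, Matrix.vecHead, Matrix.vecTail]
  have hmapB : ∀ v : ℂ, ((Polynomial.aeval v).toRingHom : Polynomial ℚ →+* ℂ).mapMatrix Bp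
      = !![(-1)*v, 0, 0, 0;
       (-1)*v, (1)*v, 0, 0;
       (-1), (2), (-1), 0;
       (-1), (3), (-3), (1)] := by
    intro v; ext i j; fin_cases i <;> fin_cases j <;>
      simp [hBp, RingHom.mapMatrix_apply, Matrix.map_apply, map_ofNat, Matrix.vecHead, Matrix.vecTail]
  have hmapW : ∀ v : ℂ, ((Polynomial.aeval v).toRingHom : Polynomial ℚ →+* ℂ).mapMatrix (Ap^4*Bp^4)
      = (!![(1), (-3), (3)*v, (-1)*v;
       0, (-1), (2)*v, (-1)*v;
       0, 0, (1)*v, (-1)*v;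
       0, 0, 0, (-1)*v])^4 * (!![(-1)*v, 0, 0, 0;
       (-1)*v, (1)*v, 0, 0;
       (-1), (2), (-1), 0;
       (-1), (3), (-3), (1)])^4 := by
    intro v; rw [map_mul, map_pow, map_pow, hmapA v, hmapB v]
  have h1 : ∀ i j : Fin 4, Polynomial.aeval u ((((Ap^4*Bp^4)^k - 1) : Matrix (Fin 4) (Fin 4) (Polynomial ℚ)) i j) = 0 := by
    have h0 : ((Polynomial.aeval u).toRingHom : Polynomial ℚ →+* ℂ).mapMatrix ((Ap^4*Bp^4)^k - 1) = 0 := by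
      rw [map_sub, map_pow, hmapW u, map_one, hWk, sub_self]
    intro i j
    have := congrFun (congrFun h0 i) j
    simpa [RingHom.mapMatrix_apply, Matrix.map_apply] using this
  have hWv : ∀ v : ℂ, IsPrimitiveRoot v 5 → ((!![(1), (-3), (3)*v, (-1)*v;
       0, (-1), (2)*v, (-1)*v;
       0, 0, (1)*v, (-1)*v;
       0, 0, 0, (-1)*v])^4 * (!![(-1)*v, 0, 0, 0;
       (-1)*v, (1)*v, 0, 0;
       (-1), (2), (-1), 0;
       (-1), (3), (-3), (1)])^4)^k = 1 := by
    intro v hv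
    have hminv : Polynomial.aeval v (minpoly ℚ u) = 0 := by
      rw [← Polynomial.cyclotomic_eq_minpoly_rat hprim (by norm_num : (0:ℕ) < 5)]
      have : Polynomial.aeval v (Polynomial.cyclotomic 5 ℚ) = Polynomial.eval v (Polynomial.cyclotomic 5 ℂ) := by
        rw [Polynomial.aeval_def, Polynomial.eval₂_eq_eval_map, Polynomial.map_cyclotomic]
      rw [this]
      exact hv.isRoot_cyclotomic (by norm_num)
    have h2 : ((Polynomial.aeval v).toRingHom : Polynomial ℚ →+* ℂ).mapMatrix ((Ap^4*Bp^4)^k - 1) = 0 := by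
      ext i j
      obtain ⟨q, hq⟩ := minpoly.dvd ℚ u (h1 i j)
      simp [RingHom.mapMatrix_apply, Matrix.map_apply, hq, hminv]
    rw [map_sub, map_pow, map_one, sub_eq_zero, hmapW v] at h2
    exact h2
  have hpowA : ∀ v : ℂ, ((!![(1), (-3), (3)*v, (-1)*v;
       0, (-1), (2)*v, (-1)*v;
       0, 0, (1)*v, (-1)*v;
       0, 0, 0, (-1)*v]) : Matrix (Fin 4) (Fin 4) ℂ)^4 = !![(1), 0, (-3)*v + (3)*v^2 + (-3)*v^3 + (3)*v^4, (2)*v + (-2)*v^2 + (2)*v^3 + (-2)*v^4;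
       0, (1), (-2)*v + (2)*v^2 + (-2)*v^3 + (2)*v^4, (1)*v + (-1)*v^2 + (1)*v^3 + (-1)*v^4;
       0, 0, (1)*v^4, 0;
       0, 0, 0, (1)*v^4] := by
    intro v
    have h2 : ((!![(1), (-3), (3)*v, (-1)*v;
       0, (-1), (2)*v, (-1)*v;
       0, 0, (1)*v, (-1)*v;
       0, 0, 0, (-1)*v]) : Matrix (Fin 4) (Fin 4) ℂ)^2 = !![(1), 0, (-3)*v + (3)*v^2, (2)*v + (-2)*v^2;
       0, (1), (-2)*v + (2)*v^2, (1)*v + (-1)*v^2;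
       0, 0, (1)*v^2, 0;
       0, 0, 0, (1)*v^2] := by
      rw [sq, mul_fin_four]; congr 1 <;> ring
    have h4 : ∀ M : Matrix (Fin 4) (Fin 4) ℂ, M^4 = (M^2)^2 := fun M => by rw [← pow_mul]
    rw [h4, h2, sq, mul_fin_four]; congr 1 <;> ring
  have hpowB : ∀ v : ℂ, ((!![(-1)*v, 0, 0, 0;
       (-1)*v, (1)*v, 0, 0;
       (-1), (2), (-1), 0;
       (-1), (3), (-3), (1)]) : Matrix (Fin 4) (Fin 4) ℂ)^4 = !![(1)*v^4, 0, 0, 0;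
       0, (1)*v^4, 0, 0;
       (1) + (-1)*v + (1)*v^2 + (-1)*v^3, (-2) + (2)*v + (-2)*v^2 + (2)*v^3, (1), 0;
       (2) + (-2)*v + (2)*v^2 + (-2)*v^3, (-3) + (3)*v + (-3)*v^2 + (3)*v^3, 0, (1)] := by
    intro v
    have h2 : ((!![(-1)*v, 0, 0, 0;
       (-1)*v, (1)*v, 0, 0;
       (-1), (2), (-1), 0;
       (-1), (3), (-3), (1)]) : Matrix (Fin 4) (Fin 4) ℂ)^2 = !![(1)*v^2, 0, 0, 0;
       0, (1)*v^2, 0, 0;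
       (1) + (-1)*v, (-2) + (2)*v, (1), 0;
       (2) + (-2)*v, (-3) + (3)*v, 0, (1)] := by
      rw [sq, mul_fin_four]; congr 1 <;> ring
    have h4 : ∀ M : Matrix (Fin 4) (Fin 4) ℂ, M^4 = (M^2)^2 := fun M => by rw [← pow_mul]
    rw [h4, h2, sq, mul_fin_four]; congr 1 <;> ring
  have htrace : ∀ v : ℂ, (((!![(1), (-3), (3)*v, (-1)*v;
       0, (-1), (2)*v, (-1)*v;
       0, 0, (1)*v, (-1)*v;
       0, 0, 0, (-1)*v])^4 * (!![(-1)*v, 0, 0, 0;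
       (-1)*v, (1)*v, 0, 0;
       (-1), (2), (-1), 0;
       (-1), (3), (-3), (1)])^4) : Matrix (Fin 4) (Fin 4) ℂ).trace = (2) * v + (-4) * v^2 + (6) * v^3 + (-4) * v^4 + (6) * v^5 + (-4) * v^6 + (2) * v^7 := by
    intro v
    rw [hpowA v, hpowB v]
    simp [Matrix.trace, Matrix.diag, Matrix.mul_apply, Fin.sum_univ_four, Matrix.vecHead, Matrix.vecTail]
    ring
  have hb0 : ‖((2) * u + (-4) * u^2 + (6) * u^3 + (-4) * u^4 + (6) * u^5 + (-4) * u^6 + (2) * u^7)‖ ≤ 4 := by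
    have := absTrace_le_four hk0 (hWv u hprim)
    rwa [htrace u] at this
  have hb1 : ‖((2) * (u^2) + (-4) * (u^2)^2 + (6) * (u^2)^3 + (-4) * (u^2)^4 + (6) * (u^2)^5 + (-4) * (u^2)^6 + (2) * (u^2)^7)‖ ≤ 4 := by
    have := absTrace_le_four hk0 (hWv (u^2) (hprim.pow_of_coprime 2 (by norm_num)))
    rwa [htrace (u^2)] at this
  have hb2 : ‖((2) * (u^3) + (-4) * (u^3)^2 + (6) * (u^3)^3 + (-4) * (u^3)^4 + (6) * (u^3)^5 + (-4) * (u^3)^6 + (2) * (u^3)^7)‖ ≤ 4 := by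
    have := absTrace_le_four hk0 (hWv (u^3) (hprim.pow_of_coprime 3 (by norm_num)))
    rwa [htrace (u^3)] at this
  have hb3 : ‖((2) * (u^4) + (-4) * (u^4)^2 + (6) * (u^4)^3 + (-4) * (u^4)^4 + (6) * (u^4)^5 + (-4) * (u^4)^6 + (2) * (u^4)^7)‖ ≤ 4 := by
    have := absTrace_le_four hk0 (hWv (u^4) (hprim.pow_of_coprime 4 (by norm_num)))
    rwa [htrace (u^4)] at this
  have h5 : u^5 = 1 := hprim.pow_eq_one
  have hne1 : u ≠ 1 := hprim.ne_one (by norm_num)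
  have hphi : u^4 + u^3 + u^2 + u + 1 = 0 := by
    rcases mul_eq_zero.mp (show (u - 1) * (u^4 + u^3 + u^2 + u + 1) = 0 by linear_combination h5) with h | h
    · exact absurd (sub_eq_zero.mp h) hne1
    · exact h
  have hprod : ((2) * u + (-4) * u^2 + (6) * u^3 + (-4) * u^4 + (6) * u^5 + (-4) * u^6 + (2) * u^7) * ((2) * (u^2) + (-4) * (u^2)^2 + (6) * (u^2)^3 + (-4) * (u^2)^4 + (6) * (u^2)^5 + (-4) * (u^2)^6 + (2) * (u^2)^7) * ((2) * (u^3) + (-4) * (u^3)^2 + (6) * (u^3)^3 + (-4) * (u^3)^4 + (6) * (u^3)^5 + (-4) * (u^3)^6 + (2) * (u^3)^7) * ((2) * (u^4) + (-4) * (u^4)^2 + (6) * (u^4)^3 + (-4) * (u^4)^4 + (6) * (u^4)^5 + (-4) * (u^4)^6 + (2) * (u^4)^7) = 1936 := by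
    linear_combination ((-1936) + (1936) * u + (-1936) * u^5 + (1936) * u^6 + (-1920) * u^10 + (1888) * u^11 + (48) * u^12 + (-16) * u^13 + (32) * u^14 + (-1984) * u^15 + (1904) * u^16 + (208) * u^18 + (-160) * u^19 + (-1872) * u^20 + (1632) * u^21 + (240) * u^22 + (192) * u^24 + (-2032) * u^25 + (1840) * u^26 + (-192) * u^27 + (144) * u^28 + (-48) * u^29 + (-1296) * u^30 + (1008) * u^31 + (592) * u^32 + (-672) * u^33 + (944) * u^34 + (-2064) * u^35 + (1280) * u^36 + (-96) * u^37 + (464) * u^38 + (-96) * u^39 + (-656) * u^40 + (-128) * u^41 + (944) * u^42 + (-672) * u^43 + (592) * u^44 + (-928) * u^45 + (640) * u^46 + (-48) * u^47 + (144) * u^48 + (-192) * u^49 + (-96) * u^50 + (-96) * u^51 + (192) * u^52 + (240) * u^54 + (-304) * u^55 + (64) * u^56 + (-160) * u^57 + (208) * u^58 + (-32) * u^60 + (-48) * u^61 + (32) * u^62 + (-16) * u^63 + (48) * u^64 + (-48) * u^65 + (16) * u^66) * hphi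
  have hcontra : (1936 : ℝ) ≤ 256 := by
    calc (1936:ℝ) = ‖(((2) * u + (-4) * u^2 + (6) * u^3 + (-4) * u^4 + (6) * u^5 + (-4) * u^6 + (2) * u^7) * ((2) * (u^2) + (-4) * (u^2)^2 + (6) * (u^2)^3 + (-4) * (u^2)^4 + (6) * (u^2)^5 + (-4) * (u^2)^6 + (2) * (u^2)^7) * ((2) * (u^3) + (-4) * (u^3)^2 + (6) * (u^3)^3 + (-4) * (u^3)^4 + (6) * (u^3)^5 + (-4) * (u^3)^6 + (2) * (u^3)^7) * ((2) * (u^4) + (-4) * (u^4)^2 + (6) * (u^4)^3 + (-4) * (u^4)^4 + (6) * (u^4)^5 + (-4) * (u^4)^6 + (2) * (u^4)^7))‖ := by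
          rw [hprod]; norm_num
      _ = ‖((2) * u + (-4) * u^2 + (6) * u^3 + (-4) * u^4 + (6) * u^5 + (-4) * u^6 + (2) * u^7)‖ * ‖((2) * (u^2) + (-4) * (u^2)^2 + (6) * (u^2)^3 + (-4) * (u^2)^4 + (6) * (u^2)^5 + (-4) * (u^2)^6 + (2) * (u^2)^7)‖ * ‖((2) * (u^3) + (-4) * (u^3)^2 + (6) * (u^3)^3 + (-4) * (u^3)^4 + (6) * (u^3)^5 + (-4) * (u^3)^6 + (2) * (u^3)^7)‖ * ‖((2) * (u^4) + (-4) * (u^4)^2 + (6) * (u^4)^3 + (-4) * (u^4)^4 + (6) * (u^4)^5 + (-4) * (u^4)^6 + (2) * (u^4)^7)‖ := by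
          rw [norm_mul, norm_mul, norm_mul]
      _ ≤ 4 * 4 * 4 * 4 := by
          exact mul_le_mul (mul_le_mul (mul_le_mul hb0 hb1 (norm_nonneg _) (by norm_num))
            hb2 (norm_nonneg _) (by positivity)) hb3 (norm_nonneg _) (by positivity)
      _ = 256 := by norm_num
  norm_num at hcontra

lemma tw_case_negone (u : ℂ) (hu : u ≠ 0) (hprim : IsPrimitiveRoot u 10) :
    Set.Infinite (matGenGroup (twA u (-1)) (twB u (-1)) : Set (Matrix (Fin 4) (Fin 4) ℂ)ˣ) := by
  by_contra hfin
  have htwA : twA u (-1) = !![(1), (-1), (1)*u, (-1)*u;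
       0, (-1), 0, (-1)*u;
       0, 0, (1)*u, (-1)*u;
       0, 0, 0, (-1)*u] := by
    unfold twA; norm_num
  have htwB : twB u (-1) = !![(-1)*u, 0, 0, 0;
       (-1)*u, (1)*u, 0, 0;
       (1), 0, (-1), 0;
       (1), (-1), (-1), (1)] := by
    unfold twB; norm_num
  have hdetA : IsUnit (twA u (-1)).det := by
    rw [htwA]
    have : (!![(1), (-1), (1)*u, (-1)*u;
       0, (-1), 0, (-1)*u;
       0, 0, (1)*u, (-1)*u;
       0, 0, 0, (-1)*u] : Matrix (Fin 4) (Fin 4) ℂ).det = u^2 := by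
      simp [Matrix.det_succ_row_zero, Fin.sum_univ_succ]; ring
    rw [this]; exact (IsUnit.pow 2 (Ne.isUnit hu))
  have hdetB : IsUnit (twB u (-1)).det := by
    rw [htwB]
    have : (!![(-1)*u, 0, 0, 0;
       (-1)*u, (1)*u, 0, 0;
       (1), 0, (-1), 0;
       (1), (-1), (-1), (1)] : Matrix (Fin 4) (Fin 4) ℂ).det = u^2 := by
      simp [Matrix.det_succ_row_zero, Fin.sum_univ_succ]; ring
    rw [this]; exact (IsUnit.pow 2 (Ne.isUnit hu))
  obtain ⟨k, hk0, hWk⟩ := exists_pow_word_eq_one hdetA hdetB hfin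
  rw [htwA, htwB] at hWk
  -- polynomial matrices over ℚ[X]
  set Ap : Matrix (Fin 4) (Fin 4) (Polynomial ℚ) := !![(1), (-1), (1)*Polynomial.X, (-1)*Polynomial.X;
       0, (-1), 0, (-1)*Polynomial.X;
       0, 0, (1)*Polynomial.X, (-1)*Polynomial.X;
       0, 0, 0, (-1)*Polynomial.X] with hAp
  set Bp : Matrix (Fin 4) (Fin 4) (Polynomial ℚ) := !![(-1)*Polynomial.X, 0, 0, 0;
       (-1)*Polynomial.X, (1)*Polynomial.X, 0, 0;
       (1), 0, (-1), 0;
       (1), (-1), (-1), (1)] with hBp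
  have hmapA : ∀ v : ℂ, ((Polynomial.aeval v).toRingHom : Polynomial ℚ →+* ℂ).mapMatrix Ap
      = !![(1), (-1), (1)*v, (-1)*v;
       0, (-1), 0, (-1)*v;
       0, 0, (1)*v, (-1)*v;
       0, 0, 0, (-1)*v] := by
    intro v; ext i j; fin_cases i <;> fin_cases j <;>
      simp [hAp, RingHom.mapMatrix_apply, Matrix.map_apply, map_ofNat, Matrix.vecHead, Matrix.vecTail]
  have hmapB : ∀ v : ℂ, ((Polynomial.aeval v).toRingHom : Polynomial ℚ →+* ℂ).mapMatrix Bp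
      = !![(-1)*v, 0, 0, 0;
       (-1)*v, (1)*v, 0, 0;
       (1), 0, (-1), 0;
       (1), (-1), (-1), (1)] := by
    intro v; ext i j; fin_cases i <;> fin_cases j <;>
      simp [hBp, RingHom.mapMatrix_apply, Matrix.map_apply, map_ofNat, Matrix.vecHead, Matrix.vecTail]
  have hmapW : ∀ v : ℂ, ((Polynomial.aeval v).toRingHom : Polynomial ℚ →+* ℂ).mapMatrix (Ap^4*Bp^4)
      = (!![(1), (-1), (1)*v, (-1)*v;
       0, (-1), 0, (-1)*v;
       0, 0, (1)*v, (-1)*v;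
       0, 0, 0, (-1)*v])^4 * (!![(-1)*v, 0, 0, 0;
       (-1)*v, (1)*v, 0, 0;
       (1), 0, (-1), 0;
       (1), (-1), (-1), (1)])^4 := by
    intro v; rw [map_mul, map_pow, map_pow, hmapA v, hmapB v]
  have h1 : ∀ i j : Fin 4, Polynomial.aeval u ((((Ap^4*Bp^4)^k - 1) : Matrix (Fin 4) (Fin 4) (Polynomial ℚ)) i j) = 0 := by
    have h0 : ((Polynomial.aeval u).toRingHom : Polynomial ℚ →+* ℂ).mapMatrix ((Ap^4*Bp^4)^k - 1) = 0 := by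
      rw [map_sub, map_pow, hmapW u, map_one, hWk, sub_self]
    intro i j
    have := congrFun (congrFun h0 i) j
    simpa [RingHom.mapMatrix_apply, Matrix.map_apply] using this
  have hWv : ∀ v : ℂ, IsPrimitiveRoot v 10 → ((!![(1), (-1), (1)*v, (-1)*v;
       0, (-1), 0, (-1)*v;
       0, 0, (1)*v, (-1)*v;
       0, 0, 0, (-1)*v])^4 * (!![(-1)*v, 0, 0, 0;
       (-1)*v, (1)*v, 0, 0;
       (1), 0, (-1), 0;
       (1), (-1), (-1), (1)])^4)^k = 1 := by
    intro v hv
    have hminv : Polynomial.aeval v (minpoly ℚ u) = 0 := by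
      rw [← Polynomial.cyclotomic_eq_minpoly_rat hprim (by norm_num : (0:ℕ) < 10)]
      have : Polynomial.aeval v (Polynomial.cyclotomic 10 ℚ) = Polynomial.eval v (Polynomial.cyclotomic 10 ℂ) := by
        rw [Polynomial.aeval_def, Polynomial.eval₂_eq_eval_map, Polynomial.map_cyclotomic]
      rw [this]
      exact hv.isRoot_cyclotomic (by norm_num)
    have h2 : ((Polynomial.aeval v).toRingHom : Polynomial ℚ →+* ℂ).mapMatrix ((Ap^4*Bp^4)^k - 1) = 0 := by
      ext i j
      obtain ⟨q, hq⟩ := minpoly.dvd ℚ u (h1 i j)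
      simp [RingHom.mapMatrix_apply, Matrix.map_apply, hq, hminv]
    rw [map_sub, map_pow, map_one, sub_eq_zero, hmapW v] at h2
    exact h2
  have hpowA : ∀ v : ℂ, ((!![(1), (-1), (1)*v, (-1)*v;
       0, (-1), 0, (-1)*v;
       0, 0, (1)*v, (-1)*v;
       0, 0, 0, (-1)*v]) : Matrix (Fin 4) (Fin 4) ℂ)^4 = !![(1), 0, (1)*v + (1)*v^2 + (1)*v^3 + (1)*v^4, 0;
       0, (1), 0, (1)*v + (1)*v^2 + (1)*v^3 + (1)*v^4;
       0, 0, (1)*v^4, 0;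
       0, 0, 0, (1)*v^4] := by
    intro v
    have h2 : ((!![(1), (-1), (1)*v, (-1)*v;
       0, (-1), 0, (-1)*v;
       0, 0, (1)*v, (-1)*v;
       0, 0, 0, (-1)*v]) : Matrix (Fin 4) (Fin 4) ℂ)^2 = !![(1), 0, (1)*v + (1)*v^2, 0;
       0, (1), 0, (1)*v + (1)*v^2;
       0, 0, (1)*v^2, 0;
       0, 0, 0, (1)*v^2] := by
      rw [sq, mul_fin_four]; congr 1 <;> ring
    have h4 : ∀ M : Matrix (Fin 4) (Fin 4) ℂ, M^4 = (M^2)^2 := fun M => by rw [← pow_mul]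
    rw [h4, h2, sq, mul_fin_four]; congr 1 <;> ring
  have hpowB : ∀ v : ℂ, ((!![(-1)*v, 0, 0, 0;
       (-1)*v, (1)*v, 0, 0;
       (1), 0, (-1), 0;
       (1), (-1), (-1), (1)]) : Matrix (Fin 4) (Fin 4) ℂ)^4 = !![(1)*v^4, 0, 0, 0;
       0, (1)*v^4, 0, 0;
       (-1) + (-1)*v + (-1)*v^2 + (-1)*v^3, 0, (1), 0;
       0, (-1) + (-1)*v + (-1)*v^2 + (-1)*v^3, 0, (1)] := by
    intro v
    have h2 : ((!![(-1)*v, 0, 0, 0;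
       (-1)*v, (1)*v, 0, 0;
       (1), 0, (-1), 0;
       (1), (-1), (-1), (1)]) : Matrix (Fin 4) (Fin 4) ℂ)^2 = !![(1)*v^2, 0, 0, 0;
       0, (1)*v^2, 0, 0;
       (-1) + (-1)*v, 0, (1), 0;
       0, (-1) + (-1)*v, 0, (1)] := by
      rw [sq, mul_fin_four]; congr 1 <;> ring
    have h4 : ∀ M : Matrix (Fin 4) (Fin 4) ℂ, M^4 = (M^2)^2 := fun M => by rw [← pow_mul]
    rw [h4, h2, sq, mul_fin_four]; congr 1 <;> ring
  have htrace : ∀ v : ℂ, (((!![(1), (-1), (1)*v, (-1)*v;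
       0, (-1), 0, (-1)*v;
       0, 0, (1)*v, (-1)*v;
       0, 0, 0, (-1)*v])^4 * (!![(-1)*v, 0, 0, 0;
       (-1)*v, (1)*v, 0, 0;
       (1), 0, (-1), 0;
       (1), (-1), (-1), (1)])^4) : Matrix (Fin 4) (Fin 4) ℂ).trace = (-2) * v + (-4) * v^2 + (-6) * v^3 + (-4) * v^4 + (-6) * v^5 + (-4) * v^6 + (-2) * v^7 := by
    intro v
    rw [hpowA v, hpowB v]
    simp [Matrix.trace, Matrix.diag, Matrix.mul_apply, Fin.sum_univ_four, Matrix.vecHead, Matrix.vecTail]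
    ring
  have hb0 : ‖((-2) * u + (-4) * u^2 + (-6) * u^3 + (-4) * u^4 + (-6) * u^5 + (-4) * u^6 + (-2) * u^7)‖ ≤ 4 := by
    have := absTrace_le_four hk0 (hWv u hprim)
    rwa [htrace u] at this
  have hb1 : ‖((-2) * (u^3) + (-4) * (u^3)^2 + (-6) * (u^3)^3 + (-4) * (u^3)^4 + (-6) * (u^3)^5 + (-4) * (u^3)^6 + (-2) * (u^3)^7)‖ ≤ 4 := by
    have := absTrace_le_four hk0 (hWv (u^3) (hprim.pow_of_coprime 3 (by norm_num)))
    rwa [htrace (u^3)] at this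
  have hb2 : ‖((-2) * (u^7) + (-4) * (u^7)^2 + (-6) * (u^7)^3 + (-4) * (u^7)^4 + (-6) * (u^7)^5 + (-4) * (u^7)^6 + (-2) * (u^7)^7)‖ ≤ 4 := by
    have := absTrace_le_four hk0 (hWv (u^7) (hprim.pow_of_coprime 7 (by norm_num)))
    rwa [htrace (u^7)] at this
  have hb3 : ‖((-2) * (u^9) + (-4) * (u^9)^2 + (-6) * (u^9)^3 + (-4) * (u^9)^4 + (-6) * (u^9)^5 + (-4) * (u^9)^6 + (-2) * (u^9)^7)‖ ≤ 4 := by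
    have := absTrace_le_four hk0 (hWv (u^9) (hprim.pow_of_coprime 9 (by norm_num)))
    rwa [htrace (u^9)] at this
  have h10 : u^10 = 1 := hprim.pow_eq_one
  have h5ne : u^5 ≠ 1 := hprim.pow_ne_one_of_pos_of_lt (by norm_num) (by norm_num)
  have h5 : u^5 = -1 := by
    rcases mul_eq_zero.mp (show (u^5 - 1) * (u^5 + 1) = 0 by linear_combination h10) with h | h
    · exact absurd (sub_eq_zero.mp h) h5ne
    · exact eq_neg_of_add_eq_zero_left h
  have hne1 : u ≠ -1 := by
    intro he
    exact hprim.pow_ne_one_of_pos_of_lt (l := 2) (by norm_num) (by norm_num) (by rw [he]; ring)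
  have hphi : u^4 - u^3 + u^2 - u + 1 = 0 := by
    rcases mul_eq_zero.mp (show (u + 1) * (u^4 - u^3 + u^2 - u + 1) = 0 by linear_combination h5) with h | h
    · exact absurd (eq_neg_of_add_eq_zero_left h) hne1
    · exact h
  have hprod : ((-2) * u + (-4) * u^2 + (-6) * u^3 + (-4) * u^4 + (-6) * u^5 + (-4) * u^6 + (-2) * u^7) * ((-2) * (u^3) + (-4) * (u^3)^2 + (-6) * (u^3)^3 + (-4) * (u^3)^4 + (-6) * (u^3)^5 + (-4) * (u^3)^6 + (-2) * (u^3)^7) * ((-2) * (u^7) + (-4) * (u^7)^2 + (-6) * (u^7)^3 + (-4) * (u^7)^4 + (-6) * (u^7)^5 + (-4) * (u^7)^6 + (-2) * (u^7)^7) * ((-2) * (u^9) + (-4) * (u^9)^2 + (-6) * (u^9)^3 + (-4) * (u^9)^4 + (-6) * (u^9)^5 + (-4) * (u^9)^6 + (-2) * (u^9)^7) = 1936 := by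
    linear_combination ((-1936) + (-1936) * u + (1936) * u^5 + (1936) * u^6 + (-1936) * u^10 + (-1936) * u^11 + (1936) * u^15 + (1936) * u^16 + (-1920) * u^20 + (-1888) * u^21 + (80) * u^22 + (112) * u^23 + (176) * u^24 + (2160) * u^25 + (2144) * u^26 + (272) * u^27 + (384) * u^28 + (384) * u^29 + (-1472) * u^30 + (-1232) * u^31 + (784) * u^32 + (832) * u^33 + (1184) * u^34 + (3296) * u^35 + (3280) * u^36 + (1680) * u^37 + (1920) * u^38 + (1824) * u^39 + (160) * u^40 + (688) * u^41 + (2720) * u^42 + (3056) * u^43 + (3744) * u^44 + (5792) * u^45 + (5792) * u^46 + (4240) * u^47 + (4416) * u^48 + (4368) * u^49 + (3104) * u^50 + (3808) * u^51 + (5984) * u^52 + (6576) * u^53 + (6976) * u^54 + (8720) * u^55 + (8704) * u^56 + (7104) * u^57 + (7120) * u^58 + (7648) * u^59 + (6752) * u^60 + (7120) * u^61 + (9408) * u^62 + (9808) * u^63 + (9648) * u^64 + (11184) * u^65 + (11280) * u^66 + (9504) * u^67 + (9728) * u^68 + (10432) * u^69 + (9248) * u^70 + (9856) * u^71 + (11888)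 * u^72 + (11984) * u^73 + (11936) * u^74 + (12992) * u^75 + (12400) * u^76 + (10944) * u^77 + (11056) * u^78 + (10944) * u^79 + (10464) * u^80 + (11056) * u^81 + (11936) * u^82 + (11984) * u^83 + (11888) * u^84 + (11792) * u^85 + (11184) * u^86 + (10432) * u^87 + (9728) * u^88 + (9504) * u^89 + (9344) * u^90 + (9248) * u^91 + (9648) * u^92 + (9808) * u^93 + (9408) * u^94 + (9056) * u^95 + (8688) * u^96 + (7648) * u^97 + (7120) * u^98 + (7104) * u^99 + (6768) * u^100 + (6784) * u^101 + (6976) * u^102 + (6576) * u^103 + (5984) * u^104 + (5744) * u^105 + (5040) * u^106 + (4368) * u^107 + (4416) * u^108 + (4240) * u^109 + (3856) * u^110 + (3856) * u^111 + (3744) * u^112 + (3056) * u^113 + (2720) * u^114 + (2624) * u^115 + (2096) * u^116 + (1824) * u^117 + (1920) * u^118 + (1680) * u^119 + (1344) * u^120 + (1360) * u^121 + (1184) * u^122 + (832) * u^123 + (784) * u^124 + (704) * u^125 + (464) * u^126 + (384) * u^127 + (384) * u^128 + (272) * u^129 + (208) * u^130 + (224) * u^131 + (176) * u^132 + (112)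 * u^133 + (80) * u^134 + (48) * u^135 + (16) * u^136) * hphi
  have hcontra : (1936 : ℝ) ≤ 256 := by
    calc (1936:ℝ) = ‖(((-2) * u + (-4) * u^2 + (-6) * u^3 + (-4) * u^4 + (-6) * u^5 + (-4) * u^6 + (-2) * u^7) * ((-2) * (u^3) + (-4) * (u^3)^2 + (-6) * (u^3)^3 + (-4) * (u^3)^4 + (-6) * (u^3)^5 + (-4) * (u^3)^6 + (-2) * (u^3)^7) * ((-2) * (u^7) + (-4) * (u^7)^2 + (-6) * (u^7)^3 + (-4) * (u^7)^4 + (-6) * (u^7)^5 + (-4) * (u^7)^6 + (-2) * (u^7)^7) * ((-2) * (u^9) + (-4) * (u^9)^2 + (-6) * (u^9)^3 + (-4) * (u^9)^4 + (-6) * (u^9)^5 + (-4) * (u^9)^6 + (-2) * (u^9)^7))‖ := by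
          rw [hprod]; norm_num
      _ = ‖((-2) * u + (-4) * u^2 + (-6) * u^3 + (-4) * u^4 + (-6) * u^5 + (-4) * u^6 + (-2) * u^7)‖ * ‖((-2) * (u^3) + (-4) * (u^3)^2 + (-6) * (u^3)^3 + (-4) * (u^3)^4 + (-6) * (u^3)^5 + (-4) * (u^3)^6 + (-2) * (u^3)^7)‖ * ‖((-2) * (u^7) + (-4) * (u^7)^2 + (-6) * (u^7)^3 + (-4) * (u^7)^4 + (-6) * (u^7)^5 + (-4) * (u^7)^6 + (-2) * (u^7)^7)‖ * ‖((-2) * (u^9) + (-4) * (u^9)^2 + (-6) * (u^9)^3 + (-4) * (u^9)^4 + (-6) * (u^9)^5 + (-4) * (u^9)^6 + (-2) * (u^9)^7)‖ := by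
          rw [norm_mul, norm_mul, norm_mul]
      _ ≤ 4 * 4 * 4 * 4 := by
          exact mul_le_mul (mul_le_mul (mul_le_mul hb0 hb1 (norm_nonneg _) (by norm_num))
            hb2 (norm_nonneg _) (by positivity)) hb3 (norm_nonneg _) (by positivity)
      _ = 256 := by norm_num
  norm_num at hcontra

theorem stmt9 (u D : ℂ) (hu : u ≠ 0) (hD : D = 1 ∨ D = -1)
    (h : (D = 1 ∧ IsPrimitiveRoot u 5) ∨ (D = -1 ∧ IsPrimitiveRoot u 10)) :
    Set.Infinite (matGenGroup (twA u D) (twB u D) : Set (Matrix (Fin 4) (Fin 4) ℂ)ˣ) := by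
  rcases h with ⟨hD1, hprim⟩ | ⟨hD1, hprim⟩
  · subst hD1; exact tw_case_one u hu hprim
  · subst hD1; exact tw_case_negone u hu hprim
end
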